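/- Let {G^{(m)}} be a sequence of finite marked groups with k generators each of which is amenable, and suppose every marked group in the Cayley closure of {G^{(m)}} is amenable. Then for every ε > 0 and C ∈ ℕ there exists R ∈ ℕ and, for each m, a family of unit vectors η_g ∈ ℓ²(G^{(m)}) indexed by g ∈ G^{(m)}, such that supp(η_g) ⊆ nbhd_R(g) and ‖η_g − η_h‖ < ε whenever d_m(g,h) ≤ C, where d_m is the word metric on G^{(m)}. (That is, the coarse disjoint union ⊔_m G^{(m)} has property A.) -/

import Mathlib

/-- The space `𝒩(k)` of normal subgroups of the free group `F_k`. -/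
def MarkedNormal (k : ℕ) : Type := {N : Subgroup (FreeGroup (Fin k)) // N.Normal}

open Classical in
/-- The characteristic function `χ_N ∈ {0,1}^{F_k}` of a normal subgroup. -/
noncomputable def chi (k : ℕ) (N : MarkedNormal k) : FreeGroup (Fin k) → Bool :=
  fun g => decide (g ∈ N.1)

/-- The Cayley topology on `𝒩(k)`: the topology of pointwise convergence of
characteristic functions. -/
noncomputable instance cayleyTopology (k : ℕ) : TopologicalSpace (MarkedNormal k) :=
  TopologicalSpace.induced (chi k) inferInstance

/-- The word length with respect to a generating set `S`. -/
noncomputable def wordLength {G : Type*} [Group G] (S : Set G) (g : G) : ℕ :=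
  sInf {n | ∃ l : List G, l.length = n ∧ (∀ x ∈ l, x ∈ S ∨ x⁻¹ ∈ S) ∧ l.prod = g}

/-- `nbhd S R Y = {g : ∃ h ∈ Y, d_S(g,h) ≤ R}`, the `R`-neighborhood of `Y` for the
word metric `d_S(g,h) = ℓ_S(g h⁻¹)`. -/
def nbhd {G : Type*} [Group G] (S : Set G) (R : ℕ) (Y : Set G) : Set G :=
  {g | ∃ h ∈ Y, wordLength S (g * h⁻¹) ≤ R}

/-- `FolnerRel(N; R) = min { #(∂₁Y)/#Y : ∅ ≠ Y ⊆ nbhd_R(1) }` computed in the marked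
quotient group `F_k/N` with the images of the free generators as markers;
here `∂₁Y = nbhd₁(Y) \ Y`. -/
noncomputable def FolnerRel (k : ℕ) (N : MarkedNormal k) (R : ℕ) : ℝ :=
  letI := N.2
  let S : Set (FreeGroup (Fin k) ⧸ N.1) :=
    Set.range fun i => (QuotientGroup.mk (FreeGroup.of i) : FreeGroup (Fin k) ⧸ N.1)
  sInf {r : ℝ | ∃ Y : Set (FreeGroup (Fin k) ⧸ N.1), Y.Nonempty ∧
      Y ⊆ nbhd S R {1} ∧
      r = ((nbhd S 1 Y \ Y).ncard : ℝ) / (Y.ncard : ℝ)}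

/-- The word metric `d_m` on the marked quotient `F_k/N`, with respect to the images of
the free generators. -/
noncomputable def quotDist (k : ℕ) (N : MarkedNormal k)
    (g h : FreeGroup (Fin k) ⧸ N.1) : ℕ :=
  letI := N.2
  wordLength
    (Set.range fun i => (QuotientGroup.mk (FreeGroup.of i) : FreeGroup (Fin k) ⧸ N.1))
    (g * h⁻¹)

namespace PropA

variable {k : ℕ}

/-- ball of radius n in the free group (as products of ≤ n generators/inverses) -/
def W (k n : ℕ) : Set (FreeGroup (Fin k)) :=
  {w | ∃ l : List (FreeGroup (Fin k)), l.length ≤ n ∧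
    (∀ x ∈ l, (∃ i, x = FreeGroup.of i) ∨ (∃ i, x = (FreeGroup.of i)⁻¹)) ∧ l.prod = w}

lemma one_mem_W (n : ℕ) : (1 : FreeGroup (Fin k)) ∈ W k n :=
  ⟨[], by simp, by simp, rfl⟩

lemma W_mono {m n : ℕ} (h : m ≤ n) : W k m ⊆ W k n := by
  rintro w ⟨l, hl, hx, hp⟩; exact ⟨l, hl.trans h, hx, hp⟩

lemma mul_mem_W {m n : ℕ} {a b : FreeGroup (Fin k)} (ha : a ∈ W k m) (hb : b ∈ W k n) :
    a * b ∈ W k (m + n) := by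
  obtain ⟨l, hl, hx, hp⟩ := ha
  obtain ⟨l', hl', hx', hp'⟩ := hb
  refine ⟨l ++ l', by simpa using Nat.add_le_add hl hl', ?_, by simp [hp, hp']⟩
  intro x hx''
  rcases List.mem_append.1 hx'' with h | h
  · exact hx x h
  · exact hx' x h

lemma inv_mem_W {n : ℕ} {a : FreeGroup (Fin k)} (ha : a ∈ W k n) : a⁻¹ ∈ W k n := by
  obtain ⟨l, hl, hx, hp⟩ := ha
  refine ⟨(l.map fun x => x⁻¹).reverse, by simpa using hl, ?_, by rw [← List.prod_inv_reverse, hp]⟩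
  intro x hx'
  simp only [List.mem_reverse, List.mem_map] at hx'
  obtain ⟨y, hy, rfl⟩ := hx'
  rcases hx y hy with ⟨i, rfl⟩ | ⟨i, rfl⟩
  · exact Or.inr ⟨i, by simp⟩
  · exact Or.inl ⟨i, by simp⟩

lemma finite_W (n : ℕ) : (W k n).Finite := by
  have : W k n ⊆ List.prod '' {l : List (FreeGroup (Fin k)) |
      l.length ≤ n ∧ ∀ x ∈ l, x ∈ (Set.range (FreeGroup.of (α := Fin k)) ∪
        (Set.range fun i : Fin k => (FreeGroup.of i)⁻¹))} := by
    rintro w ⟨l, hl, hx, hp⟩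
    refine ⟨l, ⟨hl, ?_⟩, hp⟩
    intro x hx'
    rcases hx x hx' with ⟨i, rfl⟩ | ⟨i, rfl⟩
    · exact Or.inl ⟨i, rfl⟩
    · exact Or.inr ⟨i, rfl⟩
  refine Set.Finite.subset (Set.Finite.image _ ?_) this
  have hA : (Set.range (FreeGroup.of (α := Fin k)) ∪
      (Set.range fun i : Fin k => (FreeGroup.of i)⁻¹)).Finite :=
    (Set.finite_range _).union (Set.finite_range _)
  haveI := hA.to_subtype
  have : {l : List (FreeGroup (Fin k)) |
      l.length ≤ n ∧ ∀ x ∈ l, x ∈ (Set.range (FreeGroup.of (α := Fin k)) ∪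
        (Set.range fun i : Fin k => (FreeGroup.of i)⁻¹))} ⊆
      (fun l : List {x // x ∈ (Set.range (FreeGroup.of (α := Fin k)) ∪
        (Set.range fun i : Fin k => (FreeGroup.of i)⁻¹))} => l.map Subtype.val) ''
      {l | l.length ≤ n} := by
    rintro l ⟨hl, hmem⟩
    refine ⟨l.pmap Subtype.mk hmem, by simpa using hl, by simp [List.map_pmap]⟩
  exact Set.Finite.subset (Set.Finite.image _ (List.finite_length_le _ n)) this

lemma exists_W_eq (w : FreeGroup (Fin k)) : ∃ n, w ∈ W k n := by
  induction w using FreeGroup.induction_on with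
  | C1 => exact ⟨0, one_mem_W 0⟩
  | of i => exact ⟨1, ⟨[FreeGroup.of i], by simp, fun x hx => by
      simp at hx; subst hx; exact Or.inl ⟨i, rfl⟩, rfl⟩⟩
  | inv_of i _ => exact ⟨1, ⟨[(FreeGroup.of i)⁻¹], by simp, fun x hx => by
      simp at hx; subst hx; exact Or.inr ⟨i, rfl⟩, rfl⟩⟩
  | mul a b ha hb =>
      obtain ⟨m, hm⟩ := ha; obtain ⟨n', hn⟩ := hb
      exact ⟨m + n', mul_mem_W hm hn⟩


section Quot
variable (N : Subgroup (FreeGroup (Fin k))) [N.Normal]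

def Sgen : Set (FreeGroup (Fin k) ⧸ N) :=
  Set.range fun i => (QuotientGroup.mk (FreeGroup.of i) : FreeGroup (Fin k) ⧸ N)

lemma mk_list_prod (l : List (FreeGroup (Fin k))) :
    (QuotientGroup.mk l.prod : FreeGroup (Fin k) ⧸ N) =
      (l.map (QuotientGroup.mk : FreeGroup (Fin k) → FreeGroup (Fin k) ⧸ N)).prod := by
  simpa using map_list_prod (QuotientGroup.mk' N) l

lemma lift_list : ∀ (l' : List (FreeGroup (Fin k) ⧸ N)),
    (∀ x ∈ l', x ∈ Sgen N ∨ x⁻¹ ∈ Sgen N) →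
    ∃ l : List (FreeGroup (Fin k)), l.length = l'.length ∧
      (∀ x ∈ l, (∃ i, x = FreeGroup.of i) ∨ (∃ i, x = (FreeGroup.of i)⁻¹)) ∧
      l.map (QuotientGroup.mk : FreeGroup (Fin k) → FreeGroup (Fin k) ⧸ N) = l' := by
  intro l'
  induction l' with
  | nil => exact fun _ => ⟨[], rfl, by simp, rfl⟩
  | cons a t ih =>
      intro h
      obtain ⟨l, hlen, hmem, hmap⟩ := ih fun x hx => h x (List.mem_cons_of_mem a hx)
      rcases h a (List.mem_cons_self (a := a) (l := t)) with ⟨i, hi⟩ | ⟨i, hi⟩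
      · exact ⟨FreeGroup.of i :: l, by simp [hlen], fun x hx => by
          rcases List.mem_cons.1 hx with rfl | hx
          · exact Or.inl ⟨i, rfl⟩
          · exact hmem x hx, by simp [hmap, hi]⟩
      · refine ⟨(FreeGroup.of i)⁻¹ :: l, by simp [hlen], fun x hx => by
          rcases List.mem_cons.1 hx with rfl | hx
          · exact Or.inr ⟨i, rfl⟩
          · exact hmem x hx, ?_⟩
        have : (QuotientGroup.mk ((FreeGroup.of i)⁻¹) : FreeGroup (Fin k) ⧸ N) = a := by
          have : (QuotientGroup.mk (FreeGroup.of i) : FreeGroup (Fin k) ⧸ N) = a⁻¹ := hi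
          rw [QuotientGroup.mk_inv, this, inv_inv]
        simp [hmap, this]

lemma wordLength_le_iff (x : FreeGroup (Fin k) ⧸ N) (n : ℕ) :
    wordLength (Sgen N) x ≤ n ↔
      x ∈ (QuotientGroup.mk : FreeGroup (Fin k) → FreeGroup (Fin k) ⧸ N) '' W k n := by
  constructor
  · intro h
    -- the defining set is nonempty
    obtain ⟨w, rfl⟩ := QuotientGroup.mk_surjective x
    obtain ⟨n₀, l₀, hl₀, hm₀, hp₀⟩ : ∃ n₀, w ∈ W k n₀ := exists_W_eq w
    have hne : {m | ∃ l : List (FreeGroup (Fin k) ⧸ N), l.length = m ∧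
        (∀ y ∈ l, y ∈ Sgen N ∨ y⁻¹ ∈ Sgen N) ∧
        l.prod = QuotientGroup.mk w}.Nonempty := by
      refine ⟨(l₀.map (QuotientGroup.mk : FreeGroup (Fin k) → FreeGroup (Fin k) ⧸ N)).length,
        l₀.map QuotientGroup.mk, rfl, ?_, by rw [← mk_list_prod, hp₀]⟩
      intro y hy
      simp only [List.mem_map] at hy
      obtain ⟨z, hz, rfl⟩ := hy
      rcases hm₀ z hz with ⟨i, rfl⟩ | ⟨i, rfl⟩
      · exact Or.inl ⟨i, rfl⟩
      · exact Or.inr ⟨i, by rw [QuotientGroup.mk_inv, inv_inv]⟩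
    have hmem := Nat.sInf_mem hne
    obtain ⟨l', hlen', hmem', hprod'⟩ := hmem
    obtain ⟨l, hlen, hm, hmap⟩ := lift_list N l' hmem'
    refine ⟨l.prod, ⟨l, ?_, hm, rfl⟩, by rw [mk_list_prod, hmap, hprod']⟩
    rw [hlen, hlen']
    exact h
  · rintro ⟨w, ⟨l, hl, hm, rfl⟩, rfl⟩
    refine le_trans (Nat.sInf_le ⟨l.map QuotientGroup.mk, rfl, ?_, (mk_list_prod N l).symm⟩)
      (by simpa using hl)
    intro y hy
    simp only [List.mem_map] at hy
    obtain ⟨z, hz, rfl⟩ := hy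
    rcases hm z hz with ⟨i, rfl⟩ | ⟨i, rfl⟩
    · exact Or.inl ⟨i, rfl⟩
    · exact Or.inr ⟨i, by rw [QuotientGroup.mk_inv, inv_inv]⟩

lemma exists_list_of_wl_le (x : FreeGroup (Fin k) ⧸ N) (n : ℕ)
    (h : wordLength (Sgen N) x ≤ n) :
    ∃ l : List (FreeGroup (Fin k) ⧸ N), l.length ≤ n ∧
      (∀ u ∈ l, u ∈ Sgen N ∨ u⁻¹ ∈ Sgen N) ∧ l.prod = x := by
  rw [wordLength_le_iff] at h
  obtain ⟨w, ⟨l, hl, hm, rfl⟩, rfl⟩ := h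
  refine ⟨l.map QuotientGroup.mk, by simpa using hl, ?_, (mk_list_prod N l).symm⟩
  intro y hy
  simp only [List.mem_map] at hy
  obtain ⟨z, hz, rfl⟩ := hy
  rcases hm z hz with ⟨i, rfl⟩ | ⟨i, rfl⟩
  · exact Or.inl ⟨i, rfl⟩
  · exact Or.inr ⟨i, by rw [QuotientGroup.mk_inv, inv_inv]⟩

lemma wordLength_inv_le (a : FreeGroup (Fin k) ⧸ N) (n : ℕ)
    (h : wordLength (Sgen N) a ≤ n) : wordLength (Sgen N) a⁻¹ ≤ n := by
  rw [wordLength_le_iff] at h ⊢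
  obtain ⟨w, hw, rfl⟩ := h
  exact ⟨w⁻¹, inv_mem_W hw, by rw [QuotientGroup.mk_inv]⟩

lemma wordLength_one_le (n : ℕ) : wordLength (Sgen N) (1 : FreeGroup (Fin k) ⧸ N) ≤ n := by
  rw [wordLength_le_iff]
  exact ⟨1, one_mem_W n, rfl⟩

/-- The set of Følner ratios, as in `FolnerRel`. -/
def ratioSet (R : ℕ) : Set ℝ :=
  {r : ℝ | ∃ Y : Set (FreeGroup (Fin k) ⧸ N), Y.Nonempty ∧
      Y ⊆ nbhd (Sgen N) R {1} ∧
      r = ((nbhd (Sgen N) 1 Y \ Y).ncard : ℝ) / (Y.ncard : ℝ)}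

lemma ratioSet_nonneg {R : ℕ} {r : ℝ} (hr : r ∈ ratioSet N R) : 0 ≤ r := by
  obtain ⟨Y, _, _, rfl⟩ := hr
  positivity

lemma ratioSet_bddBelow (R : ℕ) : BddBelow (ratioSet N R) :=
  ⟨0, fun r hr => ratioSet_nonneg N hr⟩

lemma ratioSet_nonempty (R : ℕ) : (ratioSet N R).Nonempty := by
  refine ⟨_, {(1 : FreeGroup (Fin k) ⧸ N)}, Set.singleton_nonempty 1, ?_, rfl⟩
  intro x hx
  rcases hx with rfl
  exact ⟨1, rfl, by simpa using wordLength_one_le N R⟩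

lemma ratioSet_mono {R R' : ℕ} (h : R ≤ R') : ratioSet N R ⊆ ratioSet N R' := by
  rintro r ⟨Y, hYne, hYR, rfl⟩
  refine ⟨Y, hYne, fun y hy => ?_, rfl⟩
  obtain ⟨o, ho, hw⟩ := hYR hy
  exact ⟨o, ho, hw.trans h⟩

lemma sInf_ratioSet_anti {R R' : ℕ} (h : R ≤ R') :
    sInf (ratioSet N R') ≤ sInf (ratioSet N R) :=
  csInf_le_csInf (ratioSet_bddBelow N R') (ratioSet_nonempty N R) (ratioSet_mono N h)

end Quot

section Translate

variable {G : Type*} [Group G] [Finite G] (S : Set G) (Y : Set G)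

/-- `tY \ Y`. -/
def shiftDiff (t : G) : Set G := ((t * ·) '' Y) \ Y

lemma wordLength_le_one {u : G} (hu : u ∈ S ∨ u⁻¹ ∈ S) : wordLength S u ≤ 1 :=
  Nat.sInf_le ⟨[u], rfl, fun x hx => by rw [List.mem_singleton] at hx; subst hx; exact hu,
    by simp⟩

lemma shiftDiff_subset_boundary {u : G} (hu : u ∈ S ∨ u⁻¹ ∈ S) :
    shiftDiff Y u ⊆ nbhd S 1 Y \ Y := by
  rintro z ⟨⟨y, hy, rfl⟩, hz⟩
  exact ⟨⟨y, hy, by simpa [mul_inv_cancel_right] using wordLength_le_one S hu⟩, hz⟩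

lemma shiftDiff_mul (u p : G) :
    shiftDiff Y (u * p) ⊆ (u * ·) '' (shiftDiff Y p) ∪ shiftDiff Y u := by
  rintro z ⟨⟨y, hy, rfl⟩, hz⟩
  by_cases hc : p * y ∈ Y
  · exact Or.inr ⟨⟨p * y, hc, by simp [mul_assoc]⟩, by simpa [mul_assoc] using hz⟩
  · exact Or.inl ⟨p * y, ⟨⟨y, hy, rfl⟩, hc⟩, by simp [mul_assoc]⟩

lemma shiftDiff_single_le {u : G} (hu : u ∈ S ∨ u⁻¹ ∈ S) :
    (shiftDiff Y u).ncard ≤ (nbhd S 1 Y \ Y).ncard :=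
  Set.ncard_le_ncard (shiftDiff_subset_boundary S Y hu) (Set.toFinite _)

lemma shiftDiff_mul_le (u p : G) :
    (shiftDiff Y (u * p)).ncard ≤ (shiftDiff Y p).ncard + (shiftDiff Y u).ncard := by
  refine le_trans (Set.ncard_le_ncard (shiftDiff_mul Y u p) (Set.toFinite _)) ?_
  refine le_trans (Set.ncard_union_le _ _) ?_
  rw [Set.ncard_image_of_injective _ (mul_right_injective u)]

lemma shiftDiff_bound : ∀ (l : List G), (∀ x ∈ l, x ∈ S ∨ x⁻¹ ∈ S) →
    (shiftDiff Y l.prod).ncard + (shiftDiff Y l.prod⁻¹).ncard ≤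
      2 * l.length * (nbhd S 1 Y \ Y).ncard := by
  intro l
  induction l with
  | nil =>
      intro _
      simp [shiftDiff, Set.image_id']
  | cons u l ih =>
      intro hmem
      have hu : u ∈ S ∨ u⁻¹ ∈ S := hmem u (List.mem_cons_self (a := u) (l := l))
      have hui : u⁻¹ ∈ S ∨ u⁻¹⁻¹ ∈ S := by rw [inv_inv]; exact hu.symm
      have h1 : (shiftDiff Y (u * l.prod)).ncard ≤
          (shiftDiff Y l.prod).ncard + (shiftDiff Y u).ncard := shiftDiff_mul_le Y u l.prod
      have h2 : (shiftDiff Y ((u * l.prod)⁻¹)).ncard ≤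
          (shiftDiff Y u⁻¹).ncard + (shiftDiff Y l.prod⁻¹).ncard := by
        rw [mul_inv_rev]
        exact shiftDiff_mul_le Y l.prod⁻¹ u⁻¹
      have ht := ih fun x hx => hmem x (List.mem_cons_of_mem u hx)
      have hs1 := shiftDiff_single_le S Y hu
      have hs2 := shiftDiff_single_le S Y hui
      rw [List.prod_cons, List.length_cons]
      have hr : 2 * (l.length + 1) * (nbhd S 1 Y \ Y).ncard =
          2 * l.length * (nbhd S 1 Y \ Y).ncard + 2 * (nbhd S 1 Y \ Y).ncard := by ring
      omega

end Translate

section PartA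

variable {k : ℕ} (N : Subgroup (FreeGroup (Fin k))) [N.Normal]
  [Finite (FreeGroup (Fin k) ⧸ N)]

lemma partA (ε : ℝ) (hε : 0 < ε) (C R : ℕ)
    (h : sInf (ratioSet N R) < ε ^ 2 / (2 * C + 1)) :
    ∃ η : (FreeGroup (Fin k) ⧸ N) → (FreeGroup (Fin k) ⧸ N) → ℝ,
      (∀ g, ∑ᶠ x, (η g x) ^ 2 = 1) ∧
      (∀ g x, η g x ≠ 0 → wordLength (Sgen N) (x * g⁻¹) ≤ R) ∧
      (∀ g h', wordLength (Sgen N) (g * h'⁻¹) ≤ C →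
        Real.sqrt (∑ᶠ x, (η g x - η h' x) ^ 2) < ε) := by
  classical
  letI : Fintype (FreeGroup (Fin k) ⧸ N) := Fintype.ofFinite _
  set G' := FreeGroup (Fin k) ⧸ N
  set δ : ℝ := ε ^ 2 / (2 * C + 1) with hδdef
  have hδ : 0 < δ := by positivity
  obtain ⟨r, ⟨Y, hYne, hYR, rfl⟩, hrδ⟩ := exists_lt_of_csInf_lt (ratioSet_nonempty N R) h
  have hY0 : (0 : ℝ) < (Y.ncard : ℝ) := by
    exact_mod_cast (Set.ncard_pos (Set.toFinite Y)).2 hYne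
  have hbd : ((nbhd (Sgen N) 1 Y \ Y).ncard : ℝ) < δ * Y.ncard :=
    (div_lt_iff₀ hY0).mp hrδ
  set c : ℝ := (Real.sqrt (Y.ncard : ℝ))⁻¹ with hcdef
  have hc2 : c ^ 2 = ((Y.ncard : ℝ))⁻¹ := by
    rw [hcdef, inv_pow, Real.sq_sqrt hY0.le]
  set Z : G' → Set G' := fun g => (fun y => y⁻¹ * g) '' Y with hZdef
  have hZmem : ∀ g x, x ∈ Z g ↔ g * x⁻¹ ∈ Y := by
    intro g x
    constructor
    · rintro ⟨y, hy, rfl⟩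
      have : g * (y⁻¹ * g)⁻¹ = y := by group
      rwa [this]
    · intro hx
      exact ⟨g * x⁻¹, hx, by group⟩
  have hZcard : ∀ g, (Z g).ncard = Y.ncard := by
    intro g
    exact Set.ncard_image_of_injective _ fun a b hab =>
      inv_injective (mul_right_cancel hab)
  refine ⟨fun g => (Z g).indicator fun _ => c, ?_, ?_, ?_⟩
  · intro g
    have hsq : ∀ x, ((Z g).indicator (fun _ => c) x) ^ 2 =
        (Z g).indicator (fun _ => c ^ 2) x := by
      intro x
      by_cases hx : x ∈ Z g <;> simp [Set.indicator_apply, hx]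
    rw [finsum_congr hsq, ← finsum_mem_def, ← Set.Finite.coe_toFinset (Set.toFinite (Z g)),
      finsum_mem_coe_finset, Finset.sum_const]
    rw [← Set.ncard_eq_toFinset_card _ (Set.toFinite (Z g)), hZcard g, nsmul_eq_mul, hc2,
      mul_inv_cancel₀ hY0.ne']
  · intro g x hx
    have hxZ : x ∈ Z g := by
      by_contra hc'
      exact hx (Set.indicator_of_notMem hc' _)
    have hmem : g * x⁻¹ ∈ Y := (hZmem g x).1 hxZ
    obtain ⟨o, ho, hw⟩ := hYR hmem
    rcases ho with rfl
    rw [inv_one, mul_one] at hw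
    have := wordLength_inv_le N _ R hw
    rwa [mul_inv_rev, inv_inv] at this
  · intro g h' hC
    obtain ⟨l, hlen, hlm, hlp⟩ := exists_list_of_wl_le N _ C hC
    set t : G' := g * h'⁻¹ with htdef
    have hdiff : ∀ a b : G', Z a \ Z b =
        (fun y => y⁻¹ * b) '' (shiftDiff Y ((a * b⁻¹)⁻¹)) := by
      intro a b
      ext x
      simp only [Set.mem_diff, hZmem]
      constructor
      · intro ⟨hax, hbx⟩
        refine ⟨b * x⁻¹, ⟨⟨a * x⁻¹, hax, by group⟩, hbx⟩, by group⟩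
      · rintro ⟨u, ⟨⟨y, hy, rfl⟩, hu⟩, rfl⟩
        constructor
        · have : a * (((a * b⁻¹)⁻¹ * y)⁻¹ * b)⁻¹ = y := by group
          rwa [this]
        · have : b * (((a * b⁻¹)⁻¹ * y)⁻¹ * b)⁻¹ = (a * b⁻¹)⁻¹ * y := by group
          rwa [this]
    have hcard1 : (Z g \ Z h').ncard = (shiftDiff Y t⁻¹).ncard := by
      rw [hdiff g h', Set.ncard_image_of_injective _ fun a b hab =>
        inv_injective (mul_right_cancel hab)]
    have hcard2 : (Z h' \ Z g).ncard = (shiftDiff Y t).ncard := by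
      rw [hdiff h' g, Set.ncard_image_of_injective _ fun a b hab =>
        inv_injective (mul_right_cancel hab)]
      congr 2
      rw [htdef]
      group
    have hsq : ∀ x, ((Z g).indicator (fun _ => c) x - (Z h').indicator (fun _ => c) x) ^ 2 =
        ((Z g \ Z h') ∪ (Z h' \ Z g)).indicator (fun _ => c ^ 2) x := by
      intro x
      by_cases h1 : x ∈ Z g <;> by_cases h2 : x ∈ Z h' <;>
        simp [Set.indicator_apply, h1, h2]
    have hsum : ∑ᶠ x, ((Z g).indicator (fun _ => c) x - (Z h').indicator (fun _ => c) x) ^ 2 =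
        (((Z g \ Z h') ∪ (Z h' \ Z g)).ncard : ℝ) * c ^ 2 := by
      rw [finsum_congr hsq, ← finsum_mem_def,
        ← Set.Finite.coe_toFinset (Set.toFinite ((Z g \ Z h') ∪ (Z h' \ Z g))),
        finsum_mem_coe_finset, Finset.sum_const,
        nsmul_eq_mul, Set.Finite.coe_toFinset,
        ← Set.ncard_eq_toFinset_card _ (Set.toFinite _)]
    have hip : l.prod = t := hlp
    have hbound := shiftDiff_bound (Sgen N) Y l hlm
    rw [hip] at hbound
    have hucard : (((Z g \ Z h') ∪ (Z h' \ Z g)).ncard : ℝ) ≤ 2 * C * ((nbhd (Sgen N) 1 Y \ Y).ncard : ℝ) := by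
      have hle : ((Z g \ Z h') ∪ (Z h' \ Z g)).ncard ≤ 2 * C * (nbhd (Sgen N) 1 Y \ Y).ncard := by
        refine le_trans (Set.ncard_union_le _ _) ?_
        rw [hcard1, hcard2]
        have h2C : 2 * l.length * (nbhd (Sgen N) 1 Y \ Y).ncard ≤
            2 * C * (nbhd (Sgen N) 1 Y \ Y).ncard := by
          exact Nat.mul_le_mul_right _ (Nat.mul_le_mul_left 2 hlen)
        omega
      exact_mod_cast hle
    rw [Real.sqrt_lt' hε, hsum]
    calc (((Z g \ Z h') ∪ (Z h' \ Z g)).ncard : ℝ) * c ^ 2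
        ≤ 2 * C * ((nbhd (Sgen N) 1 Y \ Y).ncard : ℝ) * c ^ 2 := by
          apply mul_le_mul_of_nonneg_right hucard (by positivity)
      _ ≤ 2 * C * (δ * Y.ncard) * c ^ 2 := by
          apply mul_le_mul_of_nonneg_right ?_ (by positivity)
          apply mul_le_mul_of_nonneg_left hbd.le (by positivity)
      _ = 2 * C * δ * (Y.ncard * (Y.ncard : ℝ)⁻¹) := by rw [hc2]; ring
      _ = 2 * C * δ := by rw [mul_inv_cancel₀ hY0.ne', mul_one]
      _ < (2 * C + 1) * δ := by nlinarith
      _ = ε ^ 2 := by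
          rw [hδdef, mul_div_cancel₀]
          positivity

end PartA

section Congr

variable {k : ℕ}

lemma ratioSet_subset (N N' : Subgroup (FreeGroup (Fin k))) [N.Normal] [N'.Normal] (R : ℕ)
    (H : ∀ w ∈ W k (2 * R + 4), (w ∈ N ↔ w ∈ N')) :
    ratioSet N R ⊆ ratioSet N' R := by
  classical
  rintro r ⟨Y, hYne, hYR, rfl⟩
  have key : ∀ {m n : ℕ}, m + n ≤ 2 * R + 4 → ∀ a b : FreeGroup (Fin k),
      a ∈ W k m → b ∈ W k n →
      ((QuotientGroup.mk a : FreeGroup (Fin k) ⧸ N) = QuotientGroup.mk b ↔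
       (QuotientGroup.mk a : FreeGroup (Fin k) ⧸ N') = QuotientGroup.mk b) := by
    intro m n hmn a b ha hb
    rw [QuotientGroup.eq, QuotientGroup.eq]
    exact H _ (W_mono hmn (mul_mem_W (inv_mem_W ha) hb))
  obtain ⟨Φ, hΦ⟩ : ∃ Φ : (FreeGroup (Fin k) ⧸ N) → (FreeGroup (Fin k) ⧸ N'),
      ∀ w ∈ W k (R + 1),
        Φ ((QuotientGroup.mk w : FreeGroup (Fin k) ⧸ N)) =
          (QuotientGroup.mk w : FreeGroup (Fin k) ⧸ N') := by
    refine ⟨fun y => if h : ∃ w, w ∈ W k (R + 1) ∧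
        (QuotientGroup.mk w : FreeGroup (Fin k) ⧸ N) = y
      then (QuotientGroup.mk h.choose : FreeGroup (Fin k) ⧸ N') else 1, ?_⟩
    intro w hw
    have hex : ∃ v, v ∈ W k (R + 1) ∧
        (QuotientGroup.mk v : FreeGroup (Fin k) ⧸ N) = QuotientGroup.mk w := ⟨w, hw, rfl⟩
    simp only [dif_pos hex]
    exact (key (by omega) _ _ hex.choose_spec.1 hw).1 hex.choose_spec.2
  have hinj : Set.InjOn Φ ((QuotientGroup.mk : FreeGroup (Fin k) → FreeGroup (Fin k) ⧸ N)
      '' W k (R + 1)) := by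
    rintro _ ⟨a, ha, rfl⟩ _ ⟨b, hb, rfl⟩ hab
    rw [hΦ a ha, hΦ b hb] at hab
    exact (key (by omega) a b ha hb).2 hab
  have hY1 : Y ⊆ (QuotientGroup.mk : FreeGroup (Fin k) → FreeGroup (Fin k) ⧸ N) '' W k R := by
    intro y hy
    obtain ⟨o, ho, hw⟩ := hYR hy
    rcases ho with rfl
    rw [inv_one, mul_one] at hw
    exact (wordLength_le_iff N y R).1 hw
  have hN1 : nbhd (Sgen N) 1 Y ⊆
      (QuotientGroup.mk : FreeGroup (Fin k) → FreeGroup (Fin k) ⧸ N) '' W k (R + 1) := by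
    rintro x ⟨h, hhY, hw⟩
    obtain ⟨u, hu, huw⟩ := (wordLength_le_iff N _ 1).1 hw
    obtain ⟨wh, hwh, hwheq⟩ := hY1 hhY
    refine ⟨u * wh, W_mono (by omega) (mul_mem_W hu hwh), ?_⟩
    rw [QuotientGroup.mk_mul, huw, hwheq]
    exact inv_mul_cancel_right x h
  have hnb : ∀ a b : FreeGroup (Fin k), a ∈ W k (R + 1) → b ∈ W k (R + 1) →
      (wordLength (Sgen N) ((QuotientGroup.mk a : FreeGroup (Fin k) ⧸ N) *
          (QuotientGroup.mk b)⁻¹) ≤ 1 ↔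
        wordLength (Sgen N') ((QuotientGroup.mk a : FreeGroup (Fin k) ⧸ N') *
          (QuotientGroup.mk b)⁻¹) ≤ 1) := by
    intro a b ha hb
    rw [wordLength_le_iff, wordLength_le_iff]
    constructor
    · rintro ⟨u, hu, hueq⟩
      refine ⟨u, hu, ?_⟩
      have h1 : (QuotientGroup.mk (u * b) : FreeGroup (Fin k) ⧸ N) = QuotientGroup.mk a := by
        rw [QuotientGroup.mk_mul, hueq, inv_mul_cancel_right]
      have h2 := (key (by omega) (u * b) a (mul_mem_W hu hb) ha).1 h1
      rw [QuotientGroup.mk_mul] at h2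
      rw [← h2, mul_inv_cancel_right]
    · rintro ⟨u, hu, hueq⟩
      refine ⟨u, hu, ?_⟩
      have h1 : (QuotientGroup.mk (u * b) : FreeGroup (Fin k) ⧸ N') = QuotientGroup.mk a := by
        rw [QuotientGroup.mk_mul, hueq, inv_mul_cancel_right]
      have h2 := (key (by omega) (u * b) a (mul_mem_W hu hb) ha).2 h1
      rw [QuotientGroup.mk_mul] at h2
      rw [← h2, mul_inv_cancel_right]
  refine ⟨Φ '' Y, hYne.image Φ, ?_, ?_⟩
  · rintro _ ⟨y, hy, rfl⟩
    obtain ⟨w, hw, rfl⟩ := hY1 hy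
    rw [hΦ w (W_mono (by omega) hw)]
    refine ⟨1, rfl, ?_⟩
    rw [inv_one, mul_one]
    exact (wordLength_le_iff N' _ R).2 ⟨w, hw, rfl⟩
  · have hbdry : nbhd (Sgen N') 1 (Φ '' Y) \ Φ '' Y = Φ '' (nbhd (Sgen N) 1 Y \ Y) := by
      ext x'
      constructor
      · rintro ⟨⟨_, ⟨h, hhY, rfl⟩, hw'⟩, hx'Y'⟩
        obtain ⟨wh, hwh, hwheq⟩ := hY1 hhY
        subst hwheq
        rw [hΦ wh (W_mono (by omega) hwh)] at hw'
        obtain ⟨u, hu, huw⟩ := (wordLength_le_iff N' _ 1).1 hw'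
        have huwh : u * wh ∈ W k (R + 1) := W_mono (by omega) (mul_mem_W hu hwh)
        have hxrep : x' = (QuotientGroup.mk (u * wh) : FreeGroup (Fin k) ⧸ N') := by
          rw [QuotientGroup.mk_mul, huw, inv_mul_cancel_right]
        refine ⟨QuotientGroup.mk (u * wh), ⟨⟨QuotientGroup.mk wh, hhY, ?_⟩, ?_⟩,
          by rw [hΦ _ huwh, hxrep]⟩
        · apply (hnb (u * wh) wh huwh (W_mono (by omega) hwh)).2
          rw [← hxrep]
          exact hw'
        · intro hmem
          exact hx'Y' ⟨QuotientGroup.mk (u * wh), hmem, by rw [hΦ _ huwh, hxrep]⟩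
      · rintro ⟨x, ⟨⟨h, hhY, hw⟩, hxY⟩, rfl⟩
        have hxball := hN1 ⟨h, hhY, hw⟩
        obtain ⟨a, ha, rfl⟩ := hxball
        obtain ⟨wh, hwh, hwheq⟩ := hY1 hhY
        have hΦh : Φ h = (QuotientGroup.mk wh : FreeGroup (Fin k) ⧸ N') := by
          rw [← hwheq, hΦ wh (W_mono (by omega) hwh)]
        constructor
        · refine ⟨Φ h, ⟨h, hhY, rfl⟩, ?_⟩
          rw [hΦ a ha, hΦh]
          apply (hnb a wh ha (W_mono (by omega) hwh)).1
          rw [hwheq]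
          exact hw
        · rintro ⟨y, hyY, hyeq⟩
          apply hxY
          have hy' : y ∈ (QuotientGroup.mk : FreeGroup (Fin k) → FreeGroup (Fin k) ⧸ N)
              '' W k (R + 1) :=
            Set.image_mono (W_mono (by omega)) (hY1 hyY)
          have := hinj hy' ⟨a, ha, rfl⟩ hyeq
          rwa [← this]
    have hs1 : nbhd (Sgen N) 1 Y \ Y ⊆
        (QuotientGroup.mk : FreeGroup (Fin k) → FreeGroup (Fin k) ⧸ N) '' W k (R + 1) :=
      fun x hx => hN1 hx.1
    have hs2 : Y ⊆
        (QuotientGroup.mk : FreeGroup (Fin k) → FreeGroup (Fin k) ⧸ N) '' W k (R + 1) :=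
      fun y hy => Set.image_mono (W_mono (by omega)) (hY1 hy)
    rw [hbdry, Set.ncard_image_of_injOn (hinj.mono hs1), Set.ncard_image_of_injOn (hinj.mono hs2)]

lemma ratioSet_congr (N N' : Subgroup (FreeGroup (Fin k))) [N.Normal] [N'.Normal] (R : ℕ)
    (H : ∀ w ∈ W k (2 * R + 4), (w ∈ N ↔ w ∈ N')) :
    ratioSet N R = ratioSet N' R :=
  Set.Subset.antisymm (ratioSet_subset N N' R H)
    (ratioSet_subset N' N R fun w hw => (H w hw).symm)

end Congr

section Topology

variable {k : ℕ}

lemma chi_eq_true_iff (M : MarkedNormal k) (w : FreeGroup (Fin k)) :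
    chi k M w = true ↔ w ∈ M.1 := by
  simp [chi]

lemma chi_injective : Function.Injective (chi k) := by
  intro M M' h
  apply Subtype.ext
  ext w
  rw [← chi_eq_true_iff, ← chi_eq_true_iff, h]

lemma isClosed_range_chi : IsClosed (Set.range (chi k)) := by
  classical
  have hbasic : ∀ (a : FreeGroup (Fin k)) (b : Bool),
      IsClosed {f : FreeGroup (Fin k) → Bool | f a = b} := by
    intro a b
    exact isClosed_singleton.preimage (continuous_apply a)
  have himp1 : ∀ a c : FreeGroup (Fin k),
      IsClosed {f : FreeGroup (Fin k) → Bool | f a = true → f c = true} := by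
    intro a c
    have he : {f : FreeGroup (Fin k) → Bool | f a = true → f c = true} =
        {f | f a = false} ∪ {f | f c = true} := by
      ext f
      simp only [Set.mem_setOf_eq, Set.mem_union]
      cases h : f a <;> simp [h]
    rw [he]
    exact (hbasic a false).union (hbasic c true)
  have himp2 : ∀ a c d : FreeGroup (Fin k),
      IsClosed {f : FreeGroup (Fin k) → Bool | f a = true → f c = true → f d = true} := by
    intro a c d
    have he : {f : FreeGroup (Fin k) → Bool | f a = true → f c = true → f d = true} =
        {f | f a = false} ∪ {f | f c = true → f d = true} := by
      ext f
      simp only [Set.mem_setOf_eq, Set.mem_union]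
      cases h : f a <;> simp [h]
    rw [he]
    exact (hbasic a false).union (himp1 c d)
  have hr : Set.range (chi k) = {f : FreeGroup (Fin k) → Bool | f 1 = true} ∩
      ((⋂ a, ⋂ b, {f : FreeGroup (Fin k) → Bool | f a = true → f b = true → f (a * b) = true}) ∩
        ((⋂ a, {f : FreeGroup (Fin k) → Bool | f a = true → f a⁻¹ = true}) ∩
          (⋂ a, ⋂ b, {f : FreeGroup (Fin k) → Bool | f b = true → f (a * b * a⁻¹) = true}))) := by
    ext f
    simp only [Set.mem_inter_iff, Set.mem_iInter, Set.mem_setOf_eq, Set.mem_range]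
    constructor
    · rintro ⟨M, rfl⟩
      refine ⟨?_, fun a b ha hb => ?_, fun a ha => ?_, fun a b hb => ?_⟩ <;>
        simp only [chi_eq_true_iff] at *
      · exact M.1.one_mem
      · exact M.1.mul_mem ha hb
      · exact M.1.inv_mem ha
      · exact M.2.conj_mem b hb a
    · rintro ⟨h1, hmul, hinv, hconj⟩
      let Ngrp : Subgroup (FreeGroup (Fin k)) :=
        { carrier := {g | f g = true}
          one_mem' := h1
          mul_mem' := fun ha hb => hmul _ _ ha hb
          inv_mem' := fun ha => hinv _ ha }
      have hnorm : Ngrp.Normal := ⟨fun n hn g => hconj g n hn⟩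
      refine ⟨⟨Ngrp, hnorm⟩, ?_⟩
      funext w
      show decide _ = f w
      cases hw : f w
      · refine decide_eq_false ?_
        intro hmem
        have : f w = true := hmem
        rw [hw] at this
        exact Bool.false_ne_true this
      · exact decide_eq_true hw
  rw [hr]
  exact (hbasic 1 true).inter
    (((isClosed_iInter fun a => isClosed_iInter fun b => himp2 a b (a * b))).inter
      ((isClosed_iInter fun a => himp1 a a⁻¹).inter
        (isClosed_iInter fun a => isClosed_iInter fun b => himp1 b (a * b * a⁻¹))))

lemma compactSpace_markedNormal : CompactSpace (MarkedNormal k) := by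
  have hemb : Topology.IsEmbedding (chi k) := ⟨⟨rfl⟩, chi_injective⟩
  constructor
  rw [hemb.isCompact_iff, Set.image_univ]
  exact isClosed_range_chi.isCompact

lemma folnerRel_eq (M : MarkedNormal k) (R : ℕ) :
    FolnerRel k M R = (letI := M.2; sInf (ratioSet M.1 R)) := rfl

lemma folnerRel_anti (M : MarkedNormal k) {R R' : ℕ} (h : R ≤ R') :
    FolnerRel k M R' ≤ FolnerRel k M R := by
  letI := M.2
  rw [folnerRel_eq, folnerRel_eq]
  exact sInf_ratioSet_anti M.1 h

lemma folnerRel_congr (M M' : MarkedNormal k) (R : ℕ)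
    (H : ∀ w ∈ W k (2 * R + 4), chi k M' w = chi k M w) :
    FolnerRel k M' R = FolnerRel k M R := by
  letI := M.2
  letI := M'.2
  rw [folnerRel_eq, folnerRel_eq]
  have he : ratioSet M'.1 R = ratioSet M.1 R :=
    ratioSet_congr M'.1 M.1 R fun w hw => by
      rw [← chi_eq_true_iff, ← chi_eq_true_iff, H w hw]
  rw [he]

lemma partB (Nseq : ℕ → MarkedNormal k)
    (hamen : ∀ M ∈ closure (Set.range Nseq), (⨅ R : ℕ, FolnerRel k M R) = 0)
    {δ : ℝ} (hδ : 0 < δ) : ∃ R : ℕ, ∀ m : ℕ, FolnerRel k (Nseq m) R < δ := by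
  classical
  haveI := compactSpace_markedNormal (k := k)
  have hKc : IsCompact (closure (Set.range Nseq)) := isClosed_closure.isCompact
  have hch : ∀ M : closure (Set.range Nseq), ∃ R : ℕ, FolnerRel k M.1 R < δ := by
    intro M
    have h0 : (⨅ R : ℕ, FolnerRel k M.1 R) < δ := by rw [hamen M.1 M.2]; exact hδ
    exact exists_lt_of_ciInf_lt h0
  choose Rm hRm using hch
  have hUopen : ∀ M : closure (Set.range Nseq),
      IsOpen {M' : MarkedNormal k | ∀ w ∈ W k (2 * Rm M + 4), chi k M' w = chi k M.1 w} := by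
    intro M
    have he : {M' : MarkedNormal k | ∀ w ∈ W k (2 * Rm M + 4), chi k M' w = chi k M.1 w} =
        ⋂ w ∈ W k (2 * Rm M + 4), {M' : MarkedNormal k | chi k M' w = chi k M.1 w} := by
      ext M'
      simp [Set.mem_iInter]
    rw [he]
    refine (finite_W _).isOpen_biInter fun w _ => ?_
    have hchi : Continuous (chi k) := continuous_induced_dom
    have hc : Continuous fun M' : MarkedNormal k => chi k M' w :=
      (continuous_apply w).comp hchi
    exact (isOpen_discrete {chi k M.1 w}).preimage hc
  obtain ⟨t, ht⟩ := hKc.elim_finite_subcover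
    (fun M : closure (Set.range Nseq) =>
      {M' : MarkedNormal k | ∀ w ∈ W k (2 * Rm M + 4), chi k M' w = chi k M.1 w})
    hUopen
    (fun M hM => Set.mem_iUnion.2 ⟨⟨M, hM⟩, fun w _ => rfl⟩)
  refine ⟨t.sup Rm, fun m => ?_⟩
  have hmK : Nseq m ∈ closure (Set.range Nseq) := subset_closure (Set.mem_range_self m)
  obtain ⟨i, hit, hiU⟩ := Set.mem_iUnion₂.1 (ht hmK)
  calc FolnerRel k (Nseq m) (t.sup Rm) ≤ FolnerRel k (Nseq m) (Rm i) :=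
      folnerRel_anti _ (Finset.le_sup hit)
    _ = FolnerRel k i.1 (Rm i) := folnerRel_congr i.1 (Nseq m) (Rm i) hiU
    _ < δ := hRm i

end Topology

end PropA

/-- Let `{G^{(m)}}` be finite marked groups with `k` generators, each amenable, such
that every marked group in the Cayley closure of `{G^{(m)}}` is amenable (amenability
being expressed by `inf_R Rel(·;R) = 0`).  Then for every `ε > 0` and `C ∈ ℕ` there is
`R ∈ ℕ` and, for each `m`, unit vectors `η_g ∈ ℓ²(G^{(m)})`, `g ∈ G^{(m)}`, with
`supp η_g ⊆ nbhd_R(g)` and `‖η_g − η_h‖ < ε` whenever `d_m(g,h) ≤ C`; i.e. the coarse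
disjoint union `⊔ₘ G^{(m)}` has property A. -/

theorem propertyA_of_amenable_cayley_closure (k : ℕ) (Nseq : ℕ → MarkedNormal k)
    (hfin : ∀ m, Finite (FreeGroup (Fin k) ⧸ (Nseq m).1))
    (hamen : ∀ M ∈ closure (Set.range Nseq), (⨅ R : ℕ, FolnerRel k M R) = 0) :
    ∀ ε : ℝ, 0 < ε → ∀ C : ℕ, ∃ R : ℕ, ∀ m : ℕ,
      ∃ η : (FreeGroup (Fin k) ⧸ (Nseq m).1) → (FreeGroup (Fin k) ⧸ (Nseq m).1) → ℝ,
        (∀ g, ∑ᶠ x, (η g x) ^ 2 = 1) ∧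
        (∀ g x, η g x ≠ 0 → quotDist k (Nseq m) x g ≤ R) ∧
        (∀ g h, quotDist k (Nseq m) g h ≤ C →
          Real.sqrt (∑ᶠ x, (η g x - η h x) ^ 2) < ε) := by
  intro ε hε C
  have hδ : (0 : ℝ) < ε ^ 2 / (2 * (C : ℝ) + 1) := by positivity
  obtain ⟨R, hR⟩ := PropA.partB Nseq hamen hδ
  refine ⟨R, fun m => ?_⟩
  letI := (Nseq m).2
  haveI := hfin m
  obtain ⟨η, h1, h2, h3⟩ := PropA.partA (Nseq m).1 ε hε C R
    (by rw [← PropA.folnerRel_eq]; exact hR m)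
  exact ⟨η, h1, fun g x hx => h2 g x hx, fun g h' hgh => h3 g h' hgh⟩
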